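/- arXiv:quant-ph/0312061 — 2 statements merged into one kernel-verified Lean document; each statement's English description precedes it below -/
import Mathlib

section
/- Complementary slackness characterization: Suppose Π_i = Θ_iΔ_iΘ_i* with Δ_i ≥ 0, Π₀ = I − ΣΠ_i ≥ 0, Z ≥ 0 Hermitian, and A_i := Θ_i*(Z − p_iρ_i)Θ_i ≥ 0 for all i. Then Tr(Σ_i Π_i(Z−p_iρ_i) + Π₀Z) = 0 if and only if ZΠ₀ = 0 and A_iΔ_i = 0 for all 1 ≤ i ≤ m. -/
open Matrix ComplexOrder

lemma trace_conjTranspose_mul_self_nonneg' {a b : Type*} [Fintype a] [Fintype b]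
    (M : Matrix a b ℂ) : 0 ≤ (Mᴴ * M).trace := by
  rw [Matrix.trace]
  refine Finset.sum_nonneg fun i _ => ?_
  rw [Matrix.diag_apply, Matrix.mul_apply]
  exact Finset.sum_nonneg fun j _ => star_mul_self_nonneg _

lemma eq_zero_of_trace_conjTranspose_mul_self {a b : Type*} [Fintype a] [Fintype b]
    (M : Matrix a b ℂ) (h : (Mᴴ * M).trace = 0) : M = 0 := by
  rw [Matrix.trace] at h
  have h1 : ∀ i ∈ Finset.univ, (0:ℂ) ≤ (Mᴴ * M).diag i := fun i _ => by
    rw [Matrix.diag_apply, Matrix.mul_apply]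
    exact Finset.sum_nonneg fun j _ => star_mul_self_nonneg _
  have h2 := (Finset.sum_eq_zero_iff_of_nonneg h1).mp h
  ext x y
  have h3 := h2 y (Finset.mem_univ y)
  rw [Matrix.diag_apply, Matrix.mul_apply] at h3
  have h4 : ∀ j ∈ Finset.univ, (0:ℂ) ≤ Mᴴ y j * M j y := fun j _ =>
    star_mul_self_nonneg _
  have h5 := (Finset.sum_eq_zero_iff_of_nonneg h4).mp h3 x (Finset.mem_univ x)
  simp only [Matrix.conjTranspose_apply] at h5
  rcases mul_eq_zero.mp h5 with h6 | h6
  · simpa using congrArg star h6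
  · simpa using h6

open scoped MatrixOrder in
lemma Matrix.posSemidef_iff_eq_transpose_mul_self {k : Type*} [Fintype k] [DecidableEq k]
    {A : Matrix k k ℂ} : A.PosSemidef ↔ ∃ B : Matrix k k ℂ, A = Bᴴ * B := by
  constructor
  · intro hA
    obtain ⟨B, hB⟩ := CStarAlgebra.nonneg_iff_eq_star_mul_self.mp hA.nonneg
    exact ⟨B, hB⟩
  · rintro ⟨B, rfl⟩
    exact posSemidef_conjTranspose_mul_self B

lemma psd_trace_mul_nonneg {k : Type*} [Fintype k] [DecidableEq k]
    {A B : Matrix k k ℂ} (hA : A.PosSemidef) (hB : B.PosSemidef) :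
    0 ≤ (A * B).trace := by
  obtain ⟨C, hC⟩ := Matrix.posSemidef_iff_eq_transpose_mul_self.mp hA
  obtain ⟨D, hD⟩ := Matrix.posSemidef_iff_eq_transpose_mul_self.mp hB
  have key : (A * B).trace = ((D * Cᴴ)ᴴ * (D * Cᴴ)).trace := by
    rw [hC, hD, Matrix.conjTranspose_mul, Matrix.conjTranspose_conjTranspose]
    rw [show Cᴴ * C * (Dᴴ * D) = Cᴴ * (C * Dᴴ * D) by noncomm_ring,
      Matrix.trace_mul_comm,
      show C * Dᴴ * D * Cᴴ = C * Dᴴ * (D * Cᴴ) by noncomm_ring]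
  rw [key]
  exact trace_conjTranspose_mul_self_nonneg' _

lemma psd_mul_eq_zero_of_trace {k : Type*} [Fintype k] [DecidableEq k]
    {A B : Matrix k k ℂ} (hA : A.PosSemidef) (hB : B.PosSemidef)
    (h : (A * B).trace = 0) : A * B = 0 := by
  obtain ⟨C, hC⟩ := Matrix.posSemidef_iff_eq_transpose_mul_self.mp hA
  obtain ⟨D, hD⟩ := Matrix.posSemidef_iff_eq_transpose_mul_self.mp hB
  have key : (A * B).trace = ((D * Cᴴ)ᴴ * (D * Cᴴ)).trace := by
    rw [hC, hD, Matrix.conjTranspose_mul, Matrix.conjTranspose_conjTranspose]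
    rw [show Cᴴ * C * (Dᴴ * D) = Cᴴ * (C * Dᴴ * D) by noncomm_ring,
      Matrix.trace_mul_comm,
      show C * Dᴴ * D * Cᴴ = C * Dᴴ * (D * Cᴴ) by noncomm_ring]
  rw [key] at h
  have hz : D * Cᴴ = 0 := eq_zero_of_trace_conjTranspose_mul_self _ h
  have hz' : C * Dᴴ = 0 := by
    have := congrArg Matrix.conjTranspose hz
    simpa [Matrix.conjTranspose_mul] using this
  rw [hC, hD, show Cᴴ * C * (Dᴴ * D) = Cᴴ * (C * Dᴴ) * D by noncomm_ring, hz']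
  simp

theorem complementary_slackness_iff
    (n m : ℕ) (r : Fin m → ℕ)
    (Θ : (i : Fin m) → Matrix (Fin n) (Fin (r i)) ℂ)
    (Δ : (i : Fin m) → Matrix (Fin (r i)) (Fin (r i)) ℂ)
    (ρ : Fin m → Matrix (Fin n) (Fin n) ℂ) (p : Fin m → ℝ)
    (Z : Matrix (Fin n) (Fin n) ℂ)
    (hΘ : ∀ i, (Θ i)ᴴ * Θ i = 1)
    (hΔ : ∀ i, (Δ i).PosSemidef)
    (hsum : (1 - ∑ i, Θ i * Δ i * (Θ i)ᴴ).PosSemidef)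
    (hρ : ∀ i, (ρ i).PosSemidef) (hρtr : ∀ i, (ρ i).trace = 1)
    (hp : ∀ i, 0 < p i)
    (hZ : Z.PosSemidef)
    (hA : ∀ i, ((Θ i)ᴴ * (Z - (p i : ℂ) • ρ i) * Θ i).PosSemidef) :
    (∑ i, Θ i * Δ i * (Θ i)ᴴ * (Z - (p i : ℂ) • ρ i)
        + (1 - ∑ i, Θ i * Δ i * (Θ i)ᴴ) * Z).trace = 0 ↔
      (Z * (1 - ∑ i, Θ i * Δ i * (Θ i)ᴴ) = 0 ∧
        ∀ i, ((Θ i)ᴴ * (Z - (p i : ℂ) • ρ i) * Θ i) * Δ i = 0) := by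
  set P0 := 1 - ∑ i, Θ i * Δ i * (Θ i)ᴴ with hP0
  have htr : (∑ i, Θ i * Δ i * (Θ i)ᴴ * (Z - (p i : ℂ) • ρ i) + P0 * Z).trace
      = ∑ i, (((Θ i)ᴴ * (Z - (p i : ℂ) • ρ i) * Θ i) * Δ i).trace
        + (Z * P0).trace := by
    rw [Matrix.trace_add, Matrix.trace_sum, Matrix.trace_mul_comm P0 Z]
    congr 1
    refine Finset.sum_congr rfl fun i _ => ?_
    generalize Z - (p i : ℂ) • ρ i = X
    rw [Matrix.mul_assoc (Θ i * Δ i) ((Θ i)ᴴ) X, Matrix.trace_mul_comm,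
      ← Matrix.mul_assoc]
  constructor
  · intro h
    rw [htr] at h
    have hterm : ∀ i, 0 ≤ (((Θ i)ᴴ * (Z - (p i : ℂ) • ρ i) * Θ i) * Δ i).trace :=
      fun i => psd_trace_mul_nonneg (hA i) (hΔ i)
    have hsumnn : (0:ℂ) ≤ ∑ i, (((Θ i)ᴴ * (Z - (p i : ℂ) • ρ i) * Θ i) * Δ i).trace :=
      Finset.sum_nonneg fun i _ => hterm i
    have hZP : 0 ≤ (Z * P0).trace := psd_trace_mul_nonneg hZ hsum
    have hboth := (add_eq_zero_iff_of_nonneg hsumnn hZP).mp h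
    refine ⟨psd_mul_eq_zero_of_trace hZ hsum hboth.2, fun i => ?_⟩
    have := (Finset.sum_eq_zero_iff_of_nonneg (fun i _ => hterm i)).mp hboth.1 i
      (Finset.mem_univ i)
    exact psd_mul_eq_zero_of_trace (hA i) (hΔ i) this
  · rintro ⟨h1, h2⟩
    rw [htr, h1]
    simp only [Matrix.trace_zero, add_zero]
    exact Finset.sum_eq_zero fun i _ => by rw [h2 i, Matrix.trace_zero]
end

section
/- In the orthogonal null space case, the dual problem reduces to a block-diagonal problem: if Θ = [Θ₁ ... Θ_m] has orthonormal columns with Θ_i*Θ_j = 0 for i ≠ j, then the minimum of Tr(Z) over Hermitian Z ≥ 0 with Θ_i*ZΘ_i ≥ p_iΘ_i*ρ_iΘ_i for all i equals Σ_{i=1}^m p_i Tr(Θ_i*ρ_iΘ_i), achieved by Z = Σ_i p_i Θ_iΘ_i*ρ_iΘ_iΘ_i*. -/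
open Matrix ComplexOrder

lemma psd_smul' {k : ℕ} (c : ℝ) (hc : 0 ≤ c) (M : Matrix (Fin k) (Fin k) ℂ) (hM : M.PosSemidef) :
    ((c:ℂ) • M).PosSemidef := by
  refine PosSemidef.of_dotProduct_mulVec_nonneg ?_ ?_
  · unfold Matrix.IsHermitian
    rw [conjTranspose_smul, hM.1.eq]
    congr 1
    simp [Complex.ext_iff]
  · intro x
    rw [smul_mulVec, dotProduct_smul, smul_eq_mul]
    exact mul_nonneg (by exact_mod_cast hc) (hM.dotProduct_mulVec_nonneg x)

lemma psd_trace_re_nonneg {k : ℕ} (M : Matrix (Fin k) (Fin k) ℂ) (hM : M.PosSemidef) :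
    0 ≤ M.trace.re := by
  have h : ∀ i, 0 ≤ M i i := fun i => by
    have := hM.dotProduct_mulVec_nonneg (Pi.single i 1)
    simpa [mulVec_single, dotProduct, Pi.single_apply, apply_ite, Finset.sum_ite_eq] using this
  have : 0 ≤ M.trace := Finset.sum_nonneg fun i _ => h i
  exact (Complex.le_def.mp this).1

theorem dual_block_diagonal_orthogonal
    (n m : ℕ) (r : Fin m → ℕ)
    (Θ : (i : Fin m) → Matrix (Fin n) (Fin (r i)) ℂ)
    (ρ : Fin m → Matrix (Fin n) (Fin n) ℂ) (p : Fin m → ℝ)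
    (hΘ : ∀ i, (Θ i)ᴴ * Θ i = 1)
    (horth : ∀ i j, i ≠ j → (Θ i)ᴴ * Θ j = 0)
    (hρ : ∀ i, (ρ i).PosSemidef) (hρtr : ∀ i, (ρ i).trace = 1)
    (hp : ∀ i, 0 < p i) :
    -- the candidate Z is dual feasible and achieves the value
    ((∑ i, (p i : ℂ) • (Θ i * ((Θ i)ᴴ * ρ i * Θ i) * (Θ i)ᴴ)).PosSemidef ∧
     (∀ i, ((Θ i)ᴴ * (∑ j, (p j : ℂ) • (Θ j * ((Θ j)ᴴ * ρ j * Θ j) * (Θ j)ᴴ)) * Θ i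
        - (p i : ℂ) • ((Θ i)ᴴ * ρ i * Θ i)).PosSemidef) ∧
     ((∑ i, (p i : ℂ) • (Θ i * ((Θ i)ᴴ * ρ i * Θ i) * (Θ i)ᴴ)).trace).re
        = ∑ i, p i * (((Θ i)ᴴ * ρ i * Θ i).trace).re) ∧
    -- and it is optimal: every dual feasible Z has at least this trace
    (∀ Z : Matrix (Fin n) (Fin n) ℂ, Z.PosSemidef →
      (∀ i, ((Θ i)ᴴ * Z * Θ i - (p i : ℂ) • ((Θ i)ᴴ * ρ i * Θ i)).PosSemidef) →
      ∑ i, p i * (((Θ i)ᴴ * ρ i * Θ i).trace).re ≤ (Z.trace).re) := by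
  have hB : ∀ i, ((Θ i)ᴴ * ρ i * Θ i).PosSemidef :=
    fun i => (hρ i).conjTranspose_mul_mul_same _
  have hterm : ∀ i, ((p i : ℂ) • (Θ i * ((Θ i)ᴴ * ρ i * Θ i) * (Θ i)ᴴ)).PosSemidef :=
    fun i => psd_smul' _ (hp i).le _ ((hB i).mul_mul_conjTranspose_same _)
  refine ⟨⟨?_, ?_, ?_⟩, ?_⟩
  · exact Finset.sum_induction _ _ (fun a b ha hb => ha.add hb) .zero (fun i _ => hterm i)
  · intro i
    have hcol : (Θ i)ᴴ * (∑ j, (p j : ℂ) • (Θ j * ((Θ j)ᴴ * ρ j * Θ j) * (Θ j)ᴴ)) * Θ i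
        = (p i : ℂ) • ((Θ i)ᴴ * ρ i * Θ i) := by
      rw [Matrix.mul_sum, Matrix.sum_mul]
      rw [Finset.sum_eq_single i]
      · rw [Matrix.mul_smul, Matrix.smul_mul]
        congr 1
        calc (Θ i)ᴴ * (Θ i * ((Θ i)ᴴ * ρ i * Θ i) * (Θ i)ᴴ) * Θ i
            = ((Θ i)ᴴ * Θ i) * ((Θ i)ᴴ * ρ i * Θ i) * ((Θ i)ᴴ * Θ i) := by
              simp only [Matrix.mul_assoc]
          _ = (Θ i)ᴴ * ρ i * Θ i := by rw [hΘ, one_mul, mul_one]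
      · intro j _ hj
        rw [Matrix.mul_smul, Matrix.smul_mul]
        have : (Θ i)ᴴ * (Θ j * ((Θ j)ᴴ * ρ j * Θ j) * (Θ j)ᴴ) * Θ i = 0 := by
          calc (Θ i)ᴴ * (Θ j * ((Θ j)ᴴ * ρ j * Θ j) * (Θ j)ᴴ) * Θ i
              = ((Θ i)ᴴ * Θ j) * ((Θ j)ᴴ * ρ j * Θ j) * ((Θ j)ᴴ * Θ i) := by
                simp only [Matrix.mul_assoc]
            _ = 0 := by rw [horth i j (Ne.symm hj)]; simp
        rw [this, smul_zero]
      · intro h; exact absurd (Finset.mem_univ i) h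
    rw [hcol, sub_self]
    exact .zero
  · have htr : ∀ i, (Θ i * ((Θ i)ᴴ * ρ i * Θ i) * (Θ i)ᴴ).trace
        = ((Θ i)ᴴ * ρ i * Θ i).trace := by
      intro i
      rw [trace_mul_cycle, hΘ, one_mul]
    rw [trace_sum, Complex.re_sum]
    refine Finset.sum_congr rfl fun i _ => ?_
    rw [trace_smul, smul_eq_mul, htr i, Complex.re_ofReal_mul]
  · intro Z hZ hfeas
    set P : Matrix (Fin n) (Fin n) ℂ := ∑ i, Θ i * (Θ i)ᴴ with hPdef
    have hPH : Pᴴ = P := by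
      rw [hPdef, conjTranspose_sum]
      exact Finset.sum_congr rfl fun i _ => by rw [conjTranspose_mul, conjTranspose_conjTranspose]
    have hP2 : P * P = P := by
      rw [hPdef, Finset.sum_mul]
      refine Finset.sum_congr rfl fun i _ => ?_
      rw [Finset.mul_sum, Finset.sum_eq_single i]
      · calc Θ i * (Θ i)ᴴ * (Θ i * (Θ i)ᴴ)
            = Θ i * ((Θ i)ᴴ * Θ i) * (Θ i)ᴴ := by simp only [Matrix.mul_assoc]
          _ = Θ i * (Θ i)ᴴ := by rw [hΘ, Matrix.mul_one]
      · intro j _ hj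
        calc Θ i * (Θ i)ᴴ * (Θ j * (Θ j)ᴴ)
            = Θ i * ((Θ i)ᴴ * Θ j) * (Θ j)ᴴ := by simp only [Matrix.mul_assoc]
          _ = 0 := by rw [horth i j (Ne.symm hj)]; simp
      · intro h; exact absurd (Finset.mem_univ i) h
    -- per-block inequality
    have hblock : ∀ i, p i * (((Θ i)ᴴ * ρ i * Θ i).trace).re ≤ (((Θ i)ᴴ * Z * Θ i).trace).re := by
      intro i
      have h0 := psd_trace_re_nonneg _ (hfeas i)
      rw [trace_sub, Complex.sub_re, trace_smul, smul_eq_mul, Complex.re_ofReal_mul] at h0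
      linarith
    have hsum : ∑ i, (((Θ i)ᴴ * Z * Θ i).trace).re = ((Z * P).trace).re := by
      rw [hPdef, Finset.mul_sum, trace_sum, Complex.re_sum]
      refine Finset.sum_congr rfl fun i _ => ?_
      congr 1
      rw [trace_mul_cycle, trace_mul_comm]
    have hcompl : ((1 - P) * Z * (1 - P)).PosSemidef := by
      have := hZ.mul_mul_conjTranspose_same (1 - P)
      rwa [conjTranspose_sub, conjTranspose_one, hPH] at this
    have hQ2 : (1 - P) * (1 - P) = 1 - P := by
      rw [sub_mul, mul_sub, mul_sub, hP2]
      simp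
    have hsplit : Z.trace = (Z * P).trace + ((1 - P) * Z * (1 - P)).trace := by
      have h1 : ((1 - P) * Z * (1 - P)).trace = (Z * (1 - P)).trace := by
        rw [trace_mul_cycle, hQ2, trace_mul_comm]
      rw [h1, ← trace_add, Matrix.mul_sub, Matrix.mul_one, add_sub_cancel]
    calc ∑ i, p i * (((Θ i)ᴴ * ρ i * Θ i).trace).re
        ≤ ∑ i, (((Θ i)ᴴ * Z * Θ i).trace).re :=
          Finset.sum_le_sum fun i _ => hblock i
      _ = ((Z * P).trace).re := hsum
      _ ≤ ((Z * P).trace).re + (((1 - P) * Z * (1 - P)).trace).re := by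
          linarith [psd_trace_re_nonneg _ hcompl]
      _ = (Z.trace).re := by rw [hsplit, Complex.add_re]
end
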